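/- arXiv:2205.04111 — 17 statements merged into one kernel-verified Lean document; each statement's English description precedes it below -/
import Mathlib

section
/- In a quantale with a pair of antitone maps ⊥(-) (left negation) and (-)⊥ (right negation) that are inverse to each other and satisfy the contraposition law x \ ⊥y = x⊥ / y for all x, y, if the quantale is unital with unit 1, then ⊥1 = 1⊥, and setting 0 := ⊥1 = 1⊥ we have ⊥x = 0 / x and x⊥ = x \ 0 for all x; moreover 0 is a dualizing element, i.e., 0 / (x \ 0) = (0 / x) \ 0 = x for all x. -/
theorem stmt0 {Q : Type*} [CompleteLattice Q]
    (mul : Q → Q → Q)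
    (hassoc : ∀ x y z, mul (mul x y) z = mul x (mul y z))
    (ldiv rdiv : Q → Q → Q)
    (hldiv : ∀ x y z : Q, mul x y ≤ z ↔ y ≤ ldiv x z)
    (hrdiv : ∀ x y z : Q, mul x y ≤ z ↔ x ≤ rdiv z y)
    (lneg rneg : Q → Q)
    (hlanti : Antitone lneg) (hranti : Antitone rneg)
    (hinv1 : ∀ x, lneg (rneg x) = x) (hinv2 : ∀ x, rneg (lneg x) = x)
    (hserre : ∀ x y, ldiv x (lneg y) = rdiv (rneg x) y)
    (e : Q) (hel : ∀ x, mul e x = x) (her : ∀ x, mul x e = x) :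
    lneg e = rneg e ∧
    (∀ x, lneg x = rdiv (lneg e) x) ∧
    (∀ x, rneg x = ldiv x (lneg e)) ∧
    (∀ x, rdiv (lneg e) (ldiv x (lneg e)) = x) ∧
    (∀ x, ldiv (rdiv (lneg e) x) (lneg e) = x) := by
  have hle : ∀ z : Q, ldiv e z = z := fun z =>
    le_antisymm (by have := (hldiv e (ldiv e z) z).mpr le_rfl; rwa [hel] at this)
      ((hldiv e z z).mp (by rw [hel]))
  have hre : ∀ z : Q, rdiv z e = z := fun z =>
    le_antisymm (by have := (hrdiv (rdiv z e) e z).mpr le_rfl; rwa [her] at this)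
      ((hrdiv z e z).mp (by rw [her]))
  -- rneg x = ldiv x (lneg e)
  have h3 : ∀ x, rneg x = ldiv x (lneg e) := fun x => by
    rw [hserre x e, hre]
  -- lneg x = rdiv (rneg e) x
  have hl' : ∀ x, lneg x = rdiv (rneg e) x := fun x => by
    rw [← hserre e x, hle]
  have h1 : lneg e = rneg e := by rw [hl' e, hre]
  have h2 : ∀ x, lneg x = rdiv (lneg e) x := fun x => by rw [h1, hl' x]
  refine ⟨h1, h2, h3, fun x => ?_, fun x => ?_⟩
  · rw [← h3 x, ← h2 (rneg x), hinv1]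
  · rw [← h2 x, ← h3 (lneg x), hinv2]
end

section
/- Let Q be a quantale with a Serre duality ⊥(-), (-)⊥ (antitone maps inverse to each other satisfying x \ ⊥y = x⊥ / y). Then the two dual multiplications x ⊕ y := ⊥(y⊥ ∗ x⊥) and x ⊕' y := (⊥y ∗ ⊥x)⊥ coincide, and both equal ⊥x \ y and x / y⊥. -/
theorem stmt2 {Q : Type*} [CompleteLattice Q]
    (mul : Q → Q → Q)
    (hassoc : ∀ x y z, mul (mul x y) z = mul x (mul y z))
    (ldiv rdiv : Q → Q → Q)
    (hldiv : ∀ x y z : Q, mul x y ≤ z ↔ y ≤ ldiv x z)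
    (hrdiv : ∀ x y z : Q, mul x y ≤ z ↔ x ≤ rdiv z y)
    (lneg rneg : Q → Q)
    (hlanti : Antitone lneg) (hranti : Antitone rneg)
    (hinv1 : ∀ x, lneg (rneg x) = x) (hinv2 : ∀ x, rneg (lneg x) = x)
    (hserre : ∀ x y, ldiv x (lneg y) = rdiv (rneg x) y) :
    ∀ x y, lneg (mul (rneg y) (rneg x)) = rneg (mul (lneg y) (lneg x)) ∧
      lneg (mul (rneg y) (rneg x)) = ldiv (lneg x) y ∧
      lneg (mul (rneg y) (rneg x)) = rdiv x (rneg y) := by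
  have gal1 : ∀ a b : Q, a ≤ lneg b ↔ b ≤ rneg a := by
    intro a b
    constructor
    · intro h; have := hranti h; rwa [hinv2] at this
    · intro h; have := hlanti h; rwa [hinv1] at this
  have gal2 : ∀ a b : Q, a ≤ rneg b ↔ b ≤ lneg a := by
    intro a b
    constructor
    · intro h; have := hlanti h; rwa [hinv1] at this
    · intro h; have := hranti h; rwa [hinv2] at this
  have key : ∀ a b c : Q, mul a b ≤ lneg c ↔ mul b c ≤ rneg a := by
    intro a b c
    rw [hldiv, hserre, ← hrdiv]
  intro x y
  have e1 : ∀ z : Q, (mul (rneg y) (rneg x) ≤ rneg z) ↔ mul z (rneg y) ≤ x := by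
    intro z
    rw [← key, hinv1]
  have h2 : lneg (mul (rneg y) (rneg x)) = ldiv (lneg x) y := by
    apply eq_of_forall_le_iff
    intro z
    rw [← hldiv, gal1, e1]
    conv_rhs => rw [← hinv1 y]
    rw [key, hinv2]
  have h3 : lneg (mul (rneg y) (rneg x)) = rdiv x (rneg y) := by
    apply eq_of_forall_le_iff
    intro z
    rw [← hrdiv, gal1, e1]
  have h1 : lneg (mul (rneg y) (rneg x)) = rneg (mul (lneg y) (lneg x)) := by
    rw [h2]
    apply Eq.symm
    apply eq_of_forall_le_iff
    intro z
    rw [← hldiv, gal2, key, hinv2]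
  exact ⟨h1, h2, h3⟩
end

section
/- For any quantale Q, the Chu construction C(Q) = Q × Q^op with multiplication (x₁,x₂) ⋆ (y₁,y₂) := (x₁ ∗ y₁, (y₁ \ x₂) ∧ (y₂ / x₁)) is a quantale, and the map ⊥(x₁,x₂) := (x₂,x₁) is an antitone involution satisfying the Serre contraposition condition, making C(Q) a (possibly unitless) Girard quantale. -/
open OrderDual in
/-- The Chu multiplication on `Q × Qᵒᵈ`. -/
def chuStar {Q : Type*} [CompleteLattice Q] (mul ldiv rdiv : Q → Q → Q)
    (p q : Q × Qᵒᵈ) : Q × Qᵒᵈ :=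
  (mul p.1 q.1, toDual (ldiv q.1 (ofDual p.2) ⊓ rdiv (ofDual q.2) p.1))

/-- The Chu duality on `Q × Qᵒᵈ`. -/
def chuNeg {Q : Type*} [CompleteLattice Q] (p : Q × Qᵒᵈ) : Q × Qᵒᵈ :=
  (OrderDual.ofDual p.2, OrderDual.toDual p.1)

theorem stmt3 {Q : Type*} [CompleteLattice Q]
    (mul : Q → Q → Q)
    (hassoc : ∀ x y z, mul (mul x y) z = mul x (mul y z))
    (ldiv rdiv : Q → Q → Q)
    (hldiv : ∀ x y z : Q, mul x y ≤ z ↔ y ≤ ldiv x z)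
    (hrdiv : ∀ x y z : Q, mul x y ≤ z ↔ x ≤ rdiv z y) :
    -- C(Q) is a quantale:
    (∀ a b c : Q × Qᵒᵈ,
        chuStar mul ldiv rdiv (chuStar mul ldiv rdiv a b) c =
          chuStar mul ldiv rdiv a (chuStar mul ldiv rdiv b c)) ∧
    (∀ (s : Set (Q × Qᵒᵈ)) (b : Q × Qᵒᵈ),
        chuStar mul ldiv rdiv (sSup s) b =
          sSup ((fun a => chuStar mul ldiv rdiv a b) '' s)) ∧
    (∀ (a : Q × Qᵒᵈ) (s : Set (Q × Qᵒᵈ)),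
        chuStar mul ldiv rdiv a (sSup s) =
          sSup ((fun b => chuStar mul ldiv rdiv a b) '' s)) ∧
    -- ⊥(-) is an antitone involution:
    Antitone (chuNeg (Q := Q)) ∧
    (∀ p : Q × Qᵒᵈ, chuNeg (chuNeg p) = p) ∧
    -- the Serre contraposition condition, with residuals of ⋆ given by suprema:
    (∀ a b : Q × Qᵒᵈ,
        sSup {c | chuStar mul ldiv rdiv a c ≤ chuNeg b} =
          sSup {c | chuStar mul ldiv rdiv c b ≤ chuNeg a}) := by
  -- characterization of `chuStar p q ≤ c` by three inequalities in `Q`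
  have hstar_le : ∀ p q c : Q × Qᵒᵈ, chuStar mul ldiv rdiv p q ≤ c ↔
      (mul p.1 q.1 ≤ c.1 ∧ mul q.1 (OrderDual.ofDual c.2) ≤ OrderDual.ofDual p.2 ∧
        mul (OrderDual.ofDual c.2) p.1 ≤ OrderDual.ofDual q.2) := by
    intro p q c
    simp only [chuStar, Prod.le_def, OrderDual.toDual_le, le_inf_iff, ← hldiv, ← hrdiv]
  -- sup in the first argument of mul
  have hmul_sSup1 : ∀ (T : Set Q) (b z : Q), mul (sSup T) b ≤ z ↔ ∀ t ∈ T, mul t b ≤ z := by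
    intro T b z
    rw [hrdiv, sSup_le_iff]
    exact forall₂_congr fun t _ => (hrdiv t b z).symm
  -- sup in the second argument of mul
  have hmul_sSup2 : ∀ (a : Q) (T : Set Q) (z : Q), mul a (sSup T) ≤ z ↔ ∀ t ∈ T, mul a t ≤ z := by
    intro a T z
    rw [hldiv, sSup_le_iff]
    exact forall₂_congr fun t _ => (hldiv a t z).symm
  -- below a sup in `Qᵒᵈ`
  have hduall : ∀ (T : Set Qᵒᵈ) (x : Q), x ≤ OrderDual.ofDual (sSup T) ↔
      ∀ t ∈ T, x ≤ OrderDual.ofDual t := by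
    intro T x
    constructor
    · intro h t ht
      exact le_trans h (le_sSup ht : t ≤ sSup T)
    · intro h
      exact (sSup_le_iff.2 h : sSup T ≤ OrderDual.toDual x)
  refine ⟨?_, ?_, ?_, fun p q h => ⟨h.2, h.1⟩, fun p => rfl, ?_⟩
  · -- associativity
    intro a b c
    apply eq_of_forall_ge_iff
    intro w
    rw [hstar_le, hstar_le]
    simp only [chuStar, OrderDual.ofDual_toDual, le_inf_iff, ← hldiv, ← hrdiv, hassoc]
    tauto
  · -- left sup-distributivity
    intro s b
    apply eq_of_forall_ge_iff
    intro w
    rw [hstar_le, sSup_le_iff]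
    simp only [Set.forall_mem_image, hstar_le, Prod.fst_sSup, Prod.snd_sSup,
      hmul_sSup1, hmul_sSup2, hduall, Set.forall_mem_image, forall_and]
  · -- right sup-distributivity
    intro a s
    apply eq_of_forall_ge_iff
    intro w
    rw [hstar_le, sSup_le_iff]
    simp only [Set.forall_mem_image, hstar_le, Prod.fst_sSup, Prod.snd_sSup,
      hmul_sSup1, hmul_sSup2, hduall, Set.forall_mem_image, forall_and]
  · -- Serre contraposition
    intro a b
    congr 1
    ext c
    simp only [Set.mem_setOf_eq, hstar_le, chuNeg, OrderDual.ofDual_toDual]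
    tauto
end

section
/- For any quantale Q, the Chu construction C(Q) = Q × Q^op with multiplication (x₁,x₂) ⋆ (y₁,y₂) := (x₁ ∗ y₁, (y₁ \ x₂) ∧ (y₂ / x₁)) is unital if and only if Q is unital. -/
open OrderDual in
/-- The Chu multiplication on `Q × Qᵒᵈ`. -/
def chuStar4 {Q : Type*} [CompleteLattice Q] (mul ldiv rdiv : Q → Q → Q)
    (p q : Q × Qᵒᵈ) : Q × Qᵒᵈ :=
  (mul p.1 q.1, toDual (ldiv q.1 (ofDual p.2) ⊓ rdiv (ofDual q.2) p.1))

theorem stmt4 {Q : Type*} [CompleteLattice Q]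
    (mul : Q → Q → Q)
    (hassoc : ∀ x y z, mul (mul x y) z = mul x (mul y z))
    (ldiv rdiv : Q → Q → Q)
    (hldiv : ∀ x y z : Q, mul x y ≤ z ↔ y ≤ ldiv x z)
    (hrdiv : ∀ x y z : Q, mul x y ≤ z ↔ x ≤ rdiv z y) :
    (∃ u : Q × Qᵒᵈ, ∀ p, chuStar4 mul ldiv rdiv u p = p ∧
        chuStar4 mul ldiv rdiv p u = p) ↔
      (∃ e : Q, ∀ x, mul e x = x ∧ mul x e = x) := by
  constructor
  · rintro ⟨u, hu⟩
    refine ⟨u.1, fun x => ?_⟩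
    obtain ⟨h1, h2⟩ := hu (x, OrderDual.toDual ⊥)
    exact ⟨congrArg Prod.fst h1, congrArg Prod.fst h2⟩
  · rintro ⟨e, he⟩
    refine ⟨(e, OrderDual.toDual ⊤), fun p => ?_⟩
    obtain ⟨x, a⟩ := p
    set a' := OrderDual.ofDual a with ha
    have hrd : rdiv a' e = a' := by
      apply le_antisymm
      · have := (hrdiv (rdiv a' e) e a').2 le_rfl
        rwa [(he _).2] at this
      · exact (hrdiv a' e a').1 (by rw [(he _).2])
    have hld : ldiv e a' = a' := by
      apply le_antisymm
      · have := (hldiv e (ldiv e a') a').2 le_rfl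
        rwa [(he _).1] at this
      · exact (hldiv e a' a').1 (by rw [(he _).1])
    constructor
    · simp only [chuStar4, (he x).1, Prod.mk.injEq, OrderDual.ofDual_toDual]
      refine ⟨trivial, ?_⟩
      have h1 : a' ≤ ldiv x ⊤ := (hldiv x a' ⊤).1 le_top
      show OrderDual.toDual (ldiv x ⊤ ⊓ rdiv a' e) = a
      rw [hrd]
      rw [inf_eq_right.2 h1]; rfl
    · simp only [chuStar4, (he x).2, Prod.mk.injEq, OrderDual.ofDual_toDual]
      refine ⟨trivial, ?_⟩
      have h1 : a' ≤ rdiv ⊤ x := (hrdiv a' x ⊤).1 le_top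
      show OrderDual.toDual (ldiv e a' ⊓ rdiv ⊤ x) = a
      rw [hld, inf_eq_left.2 h1]; rfl
end

section
/- Let (l, r) be a Serre Galois connection on a quantale (Q, ∗), i.e., a Galois connection (y ≤ l(x) ⟺ x ≤ r(y)) with l ∘ r = r ∘ l and satisfying x ∗ y ≤ r(z) ⟺ z ∗ x ≤ l(y) for all x, y, z. Then j := l ∘ r is a quantic nucleus on Q, i.e., a closure operator satisfying j(x) ∗ j(y) ≤ j(x ∗ y). -/
theorem stmt5 {Q : Type*} [CompleteLattice Q]
    (mul : Q → Q → Q)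
    (hassoc : ∀ x y z, mul (mul x y) z = mul x (mul y z))
    (ldiv rdiv : Q → Q → Q)
    (hldiv : ∀ x y z : Q, mul x y ≤ z ↔ y ≤ ldiv x z)
    (hrdiv : ∀ x y z : Q, mul x y ≤ z ↔ x ≤ rdiv z y)
    (l r : Q → Q)
    (hgc : ∀ x y, y ≤ l x ↔ x ≤ r y)
    (hcomm : l ∘ r = r ∘ l)
    (hshift : ∀ x y z, mul x y ≤ r z ↔ mul z x ≤ l y) :
    Monotone (l ∘ r) ∧
    (∀ x, x ≤ (l ∘ r) x) ∧
    (∀ x, (l ∘ r) ((l ∘ r) x) = (l ∘ r) x) ∧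
    (∀ x y, mul ((l ∘ r) x) ((l ∘ r) y) ≤ (l ∘ r) (mul x y)) := by
  have hxr : ∀ x, x ≤ r (l x) := fun x => (hgc x (l x)).mp le_rfl
  have hxl : ∀ y, y ≤ l (r y) := fun y => (hgc (r y) y).mpr le_rfl
  have hl : ∀ a b, a ≤ b → l b ≤ l a := fun a b h => (hgc a (l b)).mpr (h.trans (hxr b))
  have hr : ∀ a b, a ≤ b → r b ≤ r a := fun a b h => (hgc (r b) a).mp (h.trans (hxl b))
  have hc : ∀ x, l (r x) = r (l x) := fun x => congrFun hcomm x
  have hlrl : ∀ x, l (r (l x)) = l x := fun x => le_antisymm (hl _ _ (hxr x)) (hxl (l x))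
  have hrlr : ∀ x, r (l (r x)) = r x := fun x => le_antisymm (hr _ _ (hxl x)) (hxr (r x))
  refine ⟨fun a b h => hl _ _ (hr _ _ h), fun x => hxl x, fun x => ?_, fun x y => ?_⟩
  · show l (r (l (r x))) = l (r x)
    rw [hrlr]
  · show mul (l (r x)) (l (r y)) ≤ l (r (mul x y))
    set a := mul x y with ha
    have h0 : mul x y ≤ r (l a) := (hc a) ▸ hxl a
    have h1 : mul (l a) x ≤ l y := (hshift x y (l a)).mp h0
    have hy : l y = l (l (r y)) := by rw [hc y, hlrl]
    have h1' : mul (l a) x ≤ l (l (r y)) := hy ▸ h1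
    have h4 : mul (l a) x ≤ r (l (l y)) := by
      have := h1'
      rw [hc y, hc (l y)] at this
      exact this
    have h5 : mul (l (l y)) (l a) ≤ l x := (hshift (l a) x (l (l y))).mp h4
    have hx : l x = l (l (r x)) := by rw [hc x, hlrl]
    have h5' : mul (l (l y)) (l a) ≤ l (l (r x)) := hx ▸ h5
    have h6 : mul (l a) (l (r x)) ≤ r (l (l y)) :=
      (hshift (l a) (l (r x)) (l (l y))).mpr h5'
    have h6' : mul (l a) (l (r x)) ≤ l (l (r y)) := by
      rw [← hc (l y), hlrl] at h6
      exact hy ▸ h6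
    have h7 : mul (l (r x)) (l (r y)) ≤ r (l a) :=
      (hshift (l (r x)) (l (r y)) (l a)).mpr h6'
    rw [hc a]
    exact h7
end

section
/- Let (l, r) be a Serre Galois connection on a quantale (Q, ∗) and let j := l ∘ r = r ∘ l be the induced nucleus with Q_j its set of fixed points and x ∗_j y := j(x ∗ y). Then l and r restrict to maps Q_j → Q_j that are inverse to each other and satisfy the Serre shift relation for ∗_j, so (Q_j, ∗_j, l, r) is a (possibly unitless) Frobenius quantale. -/
theorem stmt6 {Q : Type*} [CompleteLattice Q]
    (mul : Q → Q → Q)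
    (hassoc : ∀ x y z, mul (mul x y) z = mul x (mul y z))
    (ldiv rdiv : Q → Q → Q)
    (hldiv : ∀ x y z : Q, mul x y ≤ z ↔ y ≤ ldiv x z)
    (hrdiv : ∀ x y z : Q, mul x y ≤ z ↔ x ≤ rdiv z y)
    (l r : Q → Q)
    (hgc : ∀ x y, y ≤ l x ↔ x ≤ r y)
    (hcomm : l ∘ r = r ∘ l)
    (hshift : ∀ x y z, mul x y ≤ r z ↔ mul z x ≤ l y)
    (j : Q → Q) (hj : j = l ∘ r) :
    -- l and r restrict to the j-closed elements:
    (∀ x, j x = x → j (l x) = l x) ∧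
    (∀ x, j x = x → j (r x) = r x) ∧
    -- the restrictions are inverse to each other:
    (∀ x, j x = x → l (r x) = x ∧ r (l x) = x) ∧
    -- and they satisfy the Serre shift relation for ∗_j:
    (∀ x y z, j x = x → j y = y → j z = z →
        (j (mul x y) ≤ r z ↔ j (mul z x) ≤ l y)) := by
  subst hj
  -- basic Galois facts
  have hle_rl : ∀ a : Q, a ≤ r (l a) := fun a => (hgc a (l a)).mp le_rfl
  have hle_lr : ∀ a : Q, a ≤ l (r a) := fun a => (hgc (r a) a).mpr le_rfl
  have hlmono : ∀ a b : Q, a ≤ b → l b ≤ l a := fun a b hab =>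
    (hgc a (l b)).mpr (hab.trans (hle_rl b))
  have hrmono : ∀ a b : Q, a ≤ b → r b ≤ r a := fun a b hab =>
    (hgc (r b) a).mp (hab.trans (hle_lr b))
  have hcomm' : ∀ a : Q, l (r a) = r (l a) := fun a => congrFun hcomm a
  -- l x is a fixed point of r ∘ l, hence of l ∘ r
  have hfixl : ∀ x : Q, l (r (l x)) = l x := fun x =>
    le_antisymm (hlmono _ _ (hle_rl x)) (hle_lr (l x))
  have hfixr : ∀ x : Q, r (l (r x)) = r x := fun x =>
    le_antisymm (hrmono _ _ (hle_lr x)) (hle_rl (r x))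
  refine ⟨fun x _ => hfixl x, fun x _ => by
      show l (r (r x)) = r x
      rw [show l (r (r x)) = r (l (r x)) from congrFun hcomm (r x)]
      exact hfixr x,
    fun x hx => ⟨hx, by rw [← hcomm'] ; exact hx⟩, ?_⟩
  intro x y z hx hy hz
  have hjmono : ∀ a b : Q, a ≤ b → l (r a) ≤ l (r b) := fun a b hab =>
    hlmono _ _ (hrmono _ _ hab)
  have hrz : l (r (r z)) = r z := by
    rw [show l (r (r z)) = r (l (r z)) from congrFun hcomm (r z)]; exact hfixr z
  have hly : l (r (l y)) = l y := hfixl y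
  constructor
  · intro h
    have : mul x y ≤ r z := le_trans (hle_lr _) h
    rw [hshift] at this
    calc l (r (mul z x)) ≤ l (r (l y)) := hjmono _ _ this
      _ = l y := hly
  · intro h
    have : mul z x ≤ l y := le_trans (hle_lr _) h
    rw [← hshift] at this
    calc l (r (mul x y)) ≤ l (r (r z)) := hjmono _ _ this
      _ = r z := hrz
end

section
/- If a quantale (Q, ∗) is unital with unit 1, then every Serre Galois connection (l, r) on Q is representable: setting 0 := r(1) = l(1), we have r(x) = x \ 0 and l(x) = 0 / x for all x. -/
theorem stmt7 {Q : Type*} [CompleteLattice Q]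
    (mul : Q → Q → Q)
    (hassoc : ∀ x y z, mul (mul x y) z = mul x (mul y z))
    (ldiv rdiv : Q → Q → Q)
    (hldiv : ∀ x y z : Q, mul x y ≤ z ↔ y ≤ ldiv x z)
    (hrdiv : ∀ x y z : Q, mul x y ≤ z ↔ x ≤ rdiv z y)
    (e : Q) (hel : ∀ x, mul e x = x) (her : ∀ x, mul x e = x)
    (l r : Q → Q)
    (hgc : ∀ x y, y ≤ l x ↔ x ≤ r y)
    (hcomm : l ∘ r = r ∘ l)
    (hshift : ∀ x y z, mul x y ≤ r z ↔ mul z x ≤ l y) :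
    r e = l e ∧ (∀ x, r x = ldiv x (r e)) ∧ (∀ x, l x = rdiv (r e) x) := by
  have key : ∀ y x, y ≤ r x ↔ x ≤ l y := by
    intro y x
    have := hshift e y x
    rwa [hel, her] at this
  constructor
  · apply le_antisymm
    · have := hshift (r e) e e
      rw [her, hel] at this
      exact this.mp le_rfl
    · have := hshift (l e) e e
      rw [her, hel] at this
      exact this.mpr le_rfl
  constructor
  · intro x
    apply le_antisymm
    · exact (hldiv x (r x) (r e)).mp (by
        have := hshift x (r x) e
        rw [hel] at this
        exact this.mpr ((key (r x) x).mp le_rfl))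
    · refine (key _ _).mpr ?_
      have := hshift x (ldiv x (r e)) e
      rw [hel] at this
      exact this.mp ((hldiv x (ldiv x (r e)) (r e)).mpr le_rfl)
  · intro x
    apply le_antisymm
    · refine (hrdiv (l x) x (r e)).mp ?_
      have := hshift (l x) x e
      rw [hel] at this
      exact this.mpr le_rfl
    · have h := (hrdiv (rdiv (r e) x) x (r e)).mpr le_rfl
      have := hshift (rdiv (r e) x) x e
      rw [hel] at this
      exact this.mp h
end

section
/- Let 0 be a weakly cyclic element of a quantale (Q, ∗), i.e., 0 / (x \ 0) = (0 / x) \ 0 for all x. Set r(x) := x \ 0, l(x) := 0 / x, and j := r ∘ l. If 0 is j-closed (j(0) = 0), then the quotient quantale (Q_j, ∗_j) is unital. Moreover, if Q itself is unital, then 0 is j-closed. -/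
theorem stmt8 {Q : Type*} [CompleteLattice Q]
    (mul : Q → Q → Q)
    (hassoc : ∀ x y z, mul (mul x y) z = mul x (mul y z))
    (ldiv rdiv : Q → Q → Q)
    (hldiv : ∀ x y z : Q, mul x y ≤ z ↔ y ≤ ldiv x z)
    (hrdiv : ∀ x y z : Q, mul x y ≤ z ↔ x ≤ rdiv z y)
    (z : Q)
    (hwc : ∀ x, rdiv z (ldiv x z) = ldiv (rdiv z x) z)
    (r l : Q → Q) (hr : ∀ x, r x = ldiv x z) (hl : ∀ x, l x = rdiv z x)
    (j : Q → Q) (hj : j = r ∘ l) :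
    -- if 0 is j-closed, then (Q_j, ∗_j) is unital:
    (j z = z →
      ∃ u, j u = u ∧ ∀ x, j x = x → j (mul u x) = x ∧ j (mul x u) = x) ∧
    -- if Q is unital, then 0 is j-closed:
    ((∃ e : Q, ∀ x, mul e x = x ∧ mul x e = x) → j z = z) := by
  have hj' : ∀ x, j x = ldiv (rdiv z x) z := by
    intro x; rw [hj]; simp [hr, hl]
  have monoL : ∀ a b c : Q, a ≤ b → mul a c ≤ mul b c := by
    intro a b c h
    exact (hrdiv _ _ _).2 (le_trans h ((hrdiv _ _ _).1 le_rfl))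
  have monoR : ∀ a b c : Q, a ≤ b → mul c a ≤ mul c b := by
    intro a b c h
    exact (hldiv _ _ _).2 (le_trans h ((hldiv _ _ _).1 le_rfl))
  have resL : ∀ x, mul x (ldiv x z) ≤ z := fun x => (hldiv _ _ _).2 le_rfl
  have resR : ∀ x, mul (rdiv z x) x ≤ z := fun x => (hrdiv _ _ _).2 le_rfl
  have leRL : ∀ x, x ≤ ldiv (rdiv z x) z := fun x => (hldiv _ _ _).1 (resR x)
  have antiR : ∀ a b : Q, a ≤ b → ldiv b z ≤ ldiv a z := by
    intro a b h
    exact (hldiv _ _ _).1 (le_trans (monoL a b _ h) (resL b))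
  have antiL : ∀ a b : Q, a ≤ b → rdiv z b ≤ rdiv z a := by
    intro a b h
    exact (hrdiv _ _ _).1 (le_trans (monoR a b _ h) (resR b))
  constructor
  · intro hz
    have hz' : ldiv (rdiv z z) z = z := by rw [← hj' z]; exact hz
    have hz'' : rdiv z (ldiv z z) = z := by rw [hwc z]; exact hz'
    -- u1 = z/z is the left unit, u2 = z\z is the right unit
    -- u1 and u2 are j-closed:
    have cu1 : j (rdiv z z) = rdiv z z := by
      rw [hj' (rdiv z z), ← hwc (rdiv z z), hz']
    have cu2 : j (ldiv z z) = ldiv z z := by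
      rw [hj' (ldiv z z), hz'']
    -- absorption lemmas
    have absL : ∀ b, mul (rdiv z z) (rdiv z b) ≤ rdiv z b := by
      intro b
      refine (hrdiv _ _ _).1 ?_
      rw [hassoc]
      exact le_trans (monoR _ _ _ (resR b)) (resR z)
    have absR : ∀ a, mul (ldiv a z) (ldiv z z) ≤ ldiv a z := by
      intro a
      refine (hldiv _ _ _).1 ?_
      rw [← hassoc]
      exact le_trans (monoL _ _ _ (resL a)) (resL z)
    have leftUnit : ∀ x, j x = x → j (mul (rdiv z z) x) = x := by
      intro x hx
      have hxr : ldiv (rdiv z x) z = x := by rw [← hj' x]; exact hx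
      have hxl : rdiv z (ldiv x z) = x := by rw [hwc x]; exact hxr
      have hle : mul (rdiv z z) x ≤ x := by
        conv_lhs => rw [← hxl]
        conv_rhs => rw [← hxl]
        exact absL (ldiv x z)
      apply le_antisymm
      · calc j (mul (rdiv z z) x) = ldiv (rdiv z (mul (rdiv z z) x)) z := hj' _
          _ ≤ ldiv (rdiv z x) z := antiR _ _ (antiL _ _ hle)
          _ = x := hxr
      · -- x ≤ j (u1 * x)
        have key : mul (mul (rdiv z z) x) (ldiv (mul (rdiv z z) x) z) ≤ z := resL _
        rw [hassoc] at key
        have key2 : mul x (ldiv (mul (rdiv z z) x) z) ≤ ldiv (rdiv z z) z :=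
          (hldiv _ _ _).1 key
        rw [hz'] at key2
        have : x ≤ rdiv z (ldiv (mul (rdiv z z) x) z) := (hrdiv _ _ _).1 key2
        rwa [hwc (mul (rdiv z z) x), ← hj' (mul (rdiv z z) x)] at this
    have rightUnit : ∀ x, j x = x → j (mul x (ldiv z z)) = x := by
      intro x hx
      have hxr : ldiv (rdiv z x) z = x := by rw [← hj' x]; exact hx
      have hle : mul x (ldiv z z) ≤ x := by
        conv_lhs => rw [← hxr]
        conv_rhs => rw [← hxr]
        exact absR (rdiv z x)
      apply le_antisymm
      · calc j (mul x (ldiv z z)) = ldiv (rdiv z (mul x (ldiv z z))) z := hj' _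
          _ ≤ ldiv (rdiv z x) z := antiR _ _ (antiL _ _ hle)
          _ = x := hxr
      · have key : mul (rdiv z (mul x (ldiv z z))) (mul x (ldiv z z)) ≤ z := resR _
        rw [← hassoc] at key
        have key2 : mul (rdiv z (mul x (ldiv z z))) x ≤ rdiv z (ldiv z z) :=
          (hrdiv _ _ _).1 key
        rw [hz''] at key2
        have : x ≤ ldiv (rdiv z (mul x (ldiv z z))) z := (hldiv _ _ _).1 key2
        rwa [← hj' (mul x (ldiv z z))] at this
    have hequ : rdiv z z = ldiv z z := by
      have h1 : j (mul (rdiv z z) (ldiv z z)) = ldiv z z := leftUnit _ cu2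
      have h2 : j (mul (rdiv z z) (ldiv z z)) = rdiv z z := rightUnit _ cu1
      rw [← h1, h2]
    refine ⟨rdiv z z, cu1, fun x hx => ⟨leftUnit x hx, ?_⟩⟩
    rw [hequ]
    exact rightUnit x hx
  · rintro ⟨e, he⟩
    rw [hj' z]
    apply le_antisymm
    · have he' : e ≤ rdiv z z := (hrdiv _ _ _).1 (le_of_eq (he z).1)
      calc ldiv (rdiv z z) z = mul e (ldiv (rdiv z z) z) := ((he _).1).symm
        _ ≤ mul (rdiv z z) (ldiv (rdiv z z) z) := monoL _ _ _ he'
        _ ≤ z := resL _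
    · exact leRL z
end

section
/- For a Galois connection (l, r) on a complete lattice Q, the condition l ∘ r = r ∘ l holds if and only if the images of l and r in Q coincide. -/
theorem stmt9 {Q : Type*} [CompleteLattice Q]
    (l r : Q → Q)
    (hgc : ∀ x y, y ≤ l x ↔ x ≤ r y) :
    l ∘ r = r ∘ l ↔ Set.range l = Set.range r := by
  have hxl : ∀ x, x ≤ r (l x) := fun x => (hgc x (l x)).mp le_rfl
  have hxr : ∀ y, y ≤ l (r y) := fun y => (hgc (r y) y).mpr le_rfl
  have lanti : ∀ a b, a ≤ b → l b ≤ l a := fun a b hab =>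
    (hgc a (l b)).mpr (le_trans hab (hxl b))
  have ranti : ∀ a b, a ≤ b → r b ≤ r a := fun a b hab =>
    (hgc (r b) a).mp (le_trans hab (hxr b))
  have lrl : ∀ x, l (r (l x)) = l x := fun x =>
    le_antisymm (lanti _ _ (hxl x)) (hxr (l x))
  have rlr : ∀ x, r (l (r x)) = r x := fun x =>
    le_antisymm (ranti _ _ (hxr x)) (hxl (r x))
  constructor
  · intro h
    have h' : ∀ x, l (r x) = r (l x) := fun x => congrFun h x
    apply Set.eq_of_subset_of_subset
    · rintro _ ⟨x, rfl⟩
      exact ⟨l (l x), by rw [← h' (l x), lrl]⟩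
    · rintro _ ⟨x, rfl⟩
      exact ⟨r (r x), by rw [h' (r x), rlr]⟩
  · intro h
    funext x
    simp only [Function.comp_apply]
    obtain ⟨a, ha⟩ : r (l x) ∈ Set.range l := h ▸ ⟨l x, rfl⟩
    obtain ⟨b, hb⟩ : l (r x) ∈ Set.range r := h.symm ▸ ⟨r x, rfl⟩
    have h1 : l (r (r (l x))) = r (l x) := by rw [← ha, lrl]
    have h2 : r (l (l (r x))) = l (r x) := by rw [← hb, rlr]
    have le1 : l (r x) ≤ r (l x) := by
      calc l (r x) ≤ l (r (r (l x))) := lanti _ _ (ranti _ _ (hxl x))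
        _ = r (l x) := h1
    have le2 : r (l x) ≤ l (r x) := by
      calc r (l x) ≤ r (l (l (r x))) := ranti _ _ (lanti _ _ (hxr x))
        _ = l (r x) := h2
    exact le_antisymm le1 le2
end

section
/- Let (S, ·) be a semigroup and (P(S), •) the free quantale on S with X • Y := {x·y : x ∈ X, y ∈ Y}. A Galois connection (l, r) on P(S) corresponding to a binary relation R (via x R y ⟺ y ∈ r({x}) ⟺ x ∈ l({y})) satisfies the shift relation X • Y ⊆ r(Z) ⟺ Z • X ⊆ l(Y) for all subsets X, Y, Z if and only if R is associative, i.e., (x·y) R z ⟺ x R (y·z) for all x, y, z ∈ S. -/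
theorem stmt10 {S : Type*} [Semigroup S] (R : S → S → Prop)
    (r l : Set S → Set S)
    (hr : ∀ Z, r Z = {u | ∀ z ∈ Z, R z u})
    (hl : ∀ Y, l Y = {u | ∀ y ∈ Y, R u y}) :
    (∀ X Y Z : Set S, Set.image2 (· * ·) X Y ⊆ r Z ↔
        Set.image2 (· * ·) Z X ⊆ l Y) ↔
      (∀ x y z : S, R (x * y) z ↔ R x (y * z)) := by
  simp only [hr, hl, Set.image2_subset_iff]
  constructor
  · intro h x y z
    have := h {y} {z} {x}
    simp at this
    exact this.symm
  · intro h X Y Z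
    constructor
    · intro hxy z hz x hx y hy
      exact (h z x y).mpr (hxy x hx y hy z hz)
    · intro hzx x hx y hy z hz
      exact (h z x y).mp (hzx z hz x hx y hy)
end

section
/- Every Frobenius quantale (Q, ∗, ⊥(-), (-)⊥) is isomorphic to a phase quantale: defining x R y ⟺ x ≤ ⊥y on the semigroup (Q, ∗), the relation R is associative, the induced Galois connection (l, r) on P(Q) is a Serre Galois connection with nucleus j(X) = ↓(⋁X), and the map x ↦ ↓x is a quantale isomorphism from Q onto the quotient quantale (P(Q)_j, •_j) carrying negations to the restrictions of l and r. -/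
theorem stmt11 {Q : Type*} [CompleteLattice Q]
    (mul : Q → Q → Q)
    (hassoc : ∀ x y z, mul (mul x y) z = mul x (mul y z))
    (ldiv rdiv : Q → Q → Q)
    (hldiv : ∀ x y z : Q, mul x y ≤ z ↔ y ≤ ldiv x z)
    (hrdiv : ∀ x y z : Q, mul x y ≤ z ↔ x ≤ rdiv z y)
    (lneg rneg : Q → Q)
    (hlanti : Antitone lneg) (hranti : Antitone rneg)
    (hinv1 : ∀ x, lneg (rneg x) = x) (hinv2 : ∀ x, rneg (lneg x) = x)
    (hserre : ∀ x y, ldiv x (lneg y) = rdiv (rneg x) y)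
    -- the Galois connection on P(Q) induced by the relation R x y ⟺ x ≤ ⊥y:
    (l r : Set Q → Set Q)
    (hl : ∀ Y, l Y = {u | ∀ y ∈ Y, u ≤ lneg y})
    (hr : ∀ X, r X = {u | ∀ x ∈ X, x ≤ lneg u})
    (j : Set Q → Set Q) (hj : j = l ∘ r) :
    -- R is associative:
    (∀ x y z : Q, mul x y ≤ lneg z ↔ x ≤ lneg (mul y z)) ∧
    -- (l, r) is a Galois connection on P(Q):
    (∀ X Y : Set Q, Y ⊆ l X ↔ X ⊆ r Y) ∧
    -- with l ∘ r = r ∘ l: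
    (∀ X : Set Q, l (r X) = r (l X)) ∧
    -- satisfying the shift relation for •:
    (∀ X Y Z : Set Q,
        Set.image2 mul X Y ⊆ r Z ↔ Set.image2 mul Z X ⊆ l Y) ∧
    -- the induced nucleus is j(X) = ↓(⋁ X):
    (∀ X : Set Q, j X = Set.Iic (sSup X)) ∧
    -- x ↦ ↓x is injective and onto the j-closed sets:
    Function.Injective (fun x : Q => Set.Iic x) ∧
    (∀ X : Set Q, j X = X → ∃ x : Q, X = Set.Iic x) ∧
    -- it is a quantale homomorphism onto (P(Q)_j, •_j):
    (∀ x y : Q,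
        j (Set.image2 mul (Set.Iic x) (Set.Iic y)) = Set.Iic (mul x y)) ∧
    -- and it carries the negations to the restrictions of l and r:
    (∀ x : Q, l (Set.Iic x) = Set.Iic (lneg x)) ∧
    (∀ x : Q, r (Set.Iic x) = Set.Iic (rneg x)) := by

  have gal : ∀ a b : Q, a ≤ lneg b ↔ b ≤ rneg a := by
    intro a b
    constructor
    · intro h
      have := hranti h
      rwa [hinv2] at this
    · intro h
      have := hlanti h
      rwa [hinv1] at this
  have assocR : ∀ x y z : Q, mul x y ≤ lneg z ↔ x ≤ lneg (mul y z) := by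
    intro x y z
    rw [hldiv, hserre, ← hrdiv, gal]
  have hmono1 : ∀ a x y : Q, a ≤ x → mul a y ≤ mul x y := by
    intro a x y h
    rw [hrdiv]
    exact le_trans h ((hrdiv x y (mul x y)).mp le_rfl)
  have hmono2 : ∀ b x y : Q, b ≤ y → mul x b ≤ mul x y := by
    intro b x y h
    rw [hldiv]
    exact le_trans h ((hldiv x y (mul x y)).mp le_rfl)
  have hlIic : ∀ x : Q, l (Set.Iic x) = Set.Iic (lneg x) := by
    intro x
    rw [hl]
    ext u
    simp only [Set.mem_setOf_eq, Set.mem_Iic]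
    constructor
    · intro h; exact h x le_rfl
    · intro h y hy; exact le_trans h (hlanti hy)
  have hrIic : ∀ x : Q, r (Set.Iic x) = Set.Iic (rneg x) := by
    intro x
    rw [hr]
    ext u
    simp only [Set.mem_setOf_eq, Set.mem_Iic]
    constructor
    · intro h; exact (gal x u).mp (h x le_rfl)
    · intro h y hy; exact (gal y u).mpr (le_trans h (hranti hy))
  have hrX : ∀ X : Set Q, r X = Set.Iic (rneg (sSup X)) := by
    intro X
    rw [hr]
    ext u
    simp only [Set.mem_setOf_eq, Set.mem_Iic]
    constructor
    · intro h
      exact (gal (sSup X) u).mp (sSup_le h)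
    · intro h x hx
      exact le_trans (le_sSup hx) ((gal (sSup X) u).mpr h)
  have hlX : ∀ X : Set Q, l X = Set.Iic (lneg (sSup X)) := by
    intro X
    rw [hl]
    ext u
    simp only [Set.mem_setOf_eq, Set.mem_Iic]
    constructor
    · intro h
      exact (gal _ _).mpr (sSup_le fun x hx => (gal u x).mp (h x hx))
    · intro h x hx
      exact le_trans h (hlanti (le_sSup hx))
  have hjX : ∀ X : Set Q, j X = Set.Iic (sSup X) := by
    intro X
    rw [hj]
    simp only [Function.comp_apply]
    rw [hrX, hlIic, hinv1]
  refine ⟨assocR, ?_, ?_, ?_, hjX, ?_, ?_, ?_, hlIic, hrIic⟩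
  · intro X Y
    rw [hl, hr]
    exact ⟨fun h x hx y hy => h hy x hx, fun h y hy x hx => h hx y hy⟩
  · intro X
    rw [hrX, hlIic, hinv1, hlX, hrIic, hinv2]
  · intro X Y Z
    constructor
    · intro h z hz
      rw [hl]
      rcases hz with ⟨a, ha, b, hb, rfl⟩
      intro y hy
      have hz' : ∀ x ∈ X, ∀ yy ∈ Y, a ≤ lneg (mul x yy) := by
        intro x hx yy hyy
        have := h (Set.mem_image2_of_mem hx hyy)
        rw [hr] at this
        exact this a ha
      exact (assocR a b y).mpr (hz' b hb y hy)
    · intro h w hw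
      rw [hr]
      rcases hw with ⟨a, ha, b, hb, rfl⟩
      intro z hz
      have := h (Set.mem_image2_of_mem hz ha)
      rw [hl] at this
      have := this b hb
      exact (assocR z a b).mp this
  · intro a b hab
    simp only [Set.Iic_inj] at hab
    exact hab
  · intro X hX
    exact ⟨sSup X, hX.symm.trans (hjX X)⟩
  · intro x y
    rw [hjX]
    have : sSup (Set.image2 mul (Set.Iic x) (Set.Iic y)) = mul x y := by
      apply le_antisymm
      · apply sSup_le
        rintro z ⟨a, ha, b, hb, rfl⟩
        exact le_trans (hmono1 a x b ha) (hmono2 b x y hb)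
      · exact le_sSup (Set.mem_image2_of_mem le_rfl le_rfl)
    rw [this]
end

section
/- If f : L → L is a meet-preserving map on a complete lattice L with left adjoint λf, then the right adjoint of the Raney transform f^∨ equals the Raney transform (λf)^∧, i.e., for all x, y: f^∨(x) ≤ y ⟺ x ≤ (λf)^∧(y). -/
/-- The Raney transform f^∨. -/
def raneV {L : Type*} [CompleteLattice L] (f : L → L) (x : L) : L :=
  sSup (f '' {t | ¬ x ≤ t})

/-- The Raney transform f^∧. -/
def raneI {L : Type*} [CompleteLattice L] (f : L → L) (x : L) : L :=
  sInf (f '' {t | ¬ t ≤ x})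

theorem stmt13 {L : Type*} [CompleteLattice L] (f lf : L → L)
    (hmeet : ∀ s : Set L, f (sInf s) = sInf (f '' s))
    (hadj : ∀ x y : L, lf x ≤ y ↔ x ≤ f y) :
    ∀ x y : L, raneV f x ≤ y ↔ x ≤ raneI lf y := by
  intro x y
  rw [raneV, raneI, sSup_le_iff, le_sInf_iff]
  constructor
  · rintro h _ ⟨s, hs, rfl⟩
    by_contra hx
    exact hs (le_trans ((hadj s (lf s)).mp le_rfl) (h (f (lf s)) ⟨lf s, hx, rfl⟩))
  · rintro h _ ⟨t, ht, rfl⟩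
    by_contra hy
    exact ht (le_trans (h (lf (f t)) ⟨f t, hy, rfl⟩) ((hadj (f t) t).mpr le_rfl))
end

section
/- On the complete lattice of all endofunctions of a complete lattice L ordered pointwise, the Raney transform (−)^∧ is right adjoint to the Raney transform (−)^∨: for all f, g : L → L, f^∨ ≤ g (pointwise) if and only if f ≤ g^∧ (pointwise). -/
theorem stmt14 {L : Type*} [CompleteLattice L] (f g : L → L) :
    (∀ x, raneV f x ≤ g x) ↔ (∀ x, f x ≤ raneI g x) := by
  constructor
  · intro h x
    unfold raneI
    apply le_sInf
    rintro _ ⟨t, ht, rfl⟩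
    refine le_trans ?_ (h t)
    exact le_sSup ⟨x, ht, rfl⟩
  · intro h x
    unfold raneV
    apply sSup_le
    rintro _ ⟨t, ht, rfl⟩
    refine le_trans (h t) ?_
    exact sInf_le ⟨x, ht, rfl⟩
end

section
/- For a complete lattice L, a map f : L → L is tight (i.e., f = (f^∧)^∨) if and only if f lies in the image of the Raney transform (−)^∨, i.e., f = g^∨ for some g : L → L. Consequently, (f^∧)^∨ is the greatest tight map below f, and the set of tight maps is closed under arbitrary (pointwise) suprema. -/
/-- A map is tight if f = (f^∧)^∨. -/
def Tight {L : Type*} [CompleteLattice L] (f : L → L) : Prop :=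
  raneV (raneI f) = f

section aux
variable {L : Type*} [CompleteLattice L]

lemma rane_adj (g f : L → L) : raneV g ≤ f ↔ g ≤ raneI f := by
  constructor
  · intro h t
    apply le_sInf
    rintro _ ⟨x, hx, rfl⟩
    exact le_trans (le_sSup (Set.mem_image_of_mem g (show t ∈ {s | ¬ x ≤ s} from hx))) (h x)
  · intro h x
    apply sSup_le
    rintro _ ⟨t, ht, rfl⟩
    exact le_trans (h t) (sInf_le ⟨x, ht, rfl⟩)

lemma raneV_mono {f g : L → L} (h : f ≤ g) : raneV f ≤ raneV g := by
  intro x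
  apply sSup_le
  rintro _ ⟨t, ht, rfl⟩
  exact le_trans (h t) (le_sSup ⟨t, ht, rfl⟩)

lemma raneI_mono {f g : L → L} (h : f ≤ g) : raneI f ≤ raneI g := by
  intro x
  apply le_sInf
  rintro _ ⟨t, ht, rfl⟩
  exact le_trans (sInf_le ⟨t, ht, rfl⟩) (h t)

lemma rane_counit (f : L → L) : raneV (raneI f) ≤ f :=
  (rane_adj _ _).mpr le_rfl

lemma rane_unit (g : L → L) : g ≤ raneI (raneV g) :=
  (rane_adj _ _).mp le_rfl

lemma tight_raneV (g : L → L) : Tight (raneV g) :=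
  le_antisymm (rane_counit _) (raneV_mono (rane_unit g))

lemma raneV_sSup (G : Set (L → L)) : raneV (sSup G) = sSup (raneV '' G) := by
  funext x
  apply le_antisymm
  · apply sSup_le
    rintro _ ⟨t, ht, rfl⟩
    rw [sSup_apply]
    apply iSup_le
    rintro ⟨g, hg⟩
    rw [sSup_apply]
    exact le_trans (le_sSup (Set.mem_image_of_mem _ ht))
      (le_iSup_of_le ⟨raneV g, ⟨g, hg, rfl⟩⟩ le_rfl)
  · rw [sSup_apply]
    apply iSup_le
    rintro ⟨_, ⟨g, hg, rfl⟩⟩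
    apply sSup_le
    rintro _ ⟨t, ht, rfl⟩
    have h1 : g t ≤ (sSup G) t := le_sSup hg t
    exact le_trans h1 (le_sSup ⟨t, ht, rfl⟩)

end aux

theorem stmt15 {L : Type*} [CompleteLattice L] :
    -- f is tight iff it lies in the image of (−)^∨:
    (∀ f : L → L, Tight f ↔ ∃ g : L → L, f = raneV g) ∧
    -- (f^∧)^∨ is the greatest tight map below f:
    (∀ f : L → L, Tight (raneV (raneI f)) ∧ raneV (raneI f) ≤ f ∧
        ∀ g : L → L, Tight g → g ≤ f → g ≤ raneV (raneI f)) ∧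
    -- tight maps are closed under arbitrary pointwise suprema:
    (∀ S : Set (L → L), (∀ g ∈ S, Tight g) → Tight (sSup S)) := by
  refine ⟨fun f => ⟨fun h => ⟨raneI f, h.symm⟩, ?_⟩, fun f => ⟨tight_raneV _, rane_counit _, ?_⟩, ?_⟩
  · rintro ⟨g, rfl⟩
    exact tight_raneV g
  · intro g hg hgf
    calc g = raneV (raneI g) := hg.symm
    _ ≤ raneV (raneI f) := raneV_mono (raneI_mono hgf)
  · intro S hS
    have himg : raneV '' (raneI '' S) = S := by
      ext g
      constructor
      · rintro ⟨_, ⟨h, hh, rfl⟩, rfl⟩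
        rwa [hS h hh]
      · intro hg
        exact ⟨raneI g, ⟨g, hg, rfl⟩, hS g hg⟩
    have : sSup S = raneV (sSup (raneI '' S)) := by
      rw [raneV_sSup, himg]
    rw [this]
    exact tight_raneV _
end

section
/- Every tight endomap of a complete lattice L is the supremum of maps of the form c_y ∘ a_x, where c_y(t) = y for t ≠ ⊥ and c_y(⊥) = ⊥, and a_x(t) = ⊤ for t ≰ x and a_x(t) = ⊥ for t ≤ x. Specifically, for any g : L → L, g^∨ = ⋁{c_{g(t)} ∘ a_t : t ∈ L}. -/
open Classical in
/-- The map c_y : t ↦ y for t ≠ ⊥, ⊥ ↦ ⊥. -/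
noncomputable def cMap {L : Type*} [CompleteLattice L] (y t : L) : L :=
  if t = ⊥ then ⊥ else y

open Classical in
/-- The map a_x : t ↦ ⊤ for t ≰ x, t ↦ ⊥ for t ≤ x. -/
noncomputable def aMap {L : Type*} [CompleteLattice L] (x t : L) : L :=
  if t ≤ x then ⊥ else ⊤

theorem stmt17 {L : Type*} [CompleteLattice L] :
    -- g^∨ = ⋁_{t ∈ L} c_{g(t)} ∘ a_t:
    (∀ g : L → L, raneV g = ⨆ t : L, (cMap (g t)) ∘ (aMap t)) ∧
    -- hence every tight map is a supremum of maps of the form c_y ∘ a_x: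
    (∀ f : L → L, Tight f →
        ∃ h : L → L, f = ⨆ t : L, (cMap (h t)) ∘ (aMap t)) := by
  classical
  have main : ∀ g : L → L, raneV g = ⨆ t : L, (cMap (g t)) ∘ (aMap t) := by
    intro g
    funext x
    have hval : ∀ t : L, (cMap (g t) ∘ aMap t) x
        = if x ≤ t then ⊥ else (if (⊤ : L) = ⊥ then ⊥ else g t) := by
      intro t
      simp only [Function.comp, cMap, aMap]
      by_cases h : x ≤ t
      · simp [h]
      · simp [h]
    rw [iSup_apply]
    simp only [hval]
    apply le_antisymm
    · apply sSup_le
      rintro _ ⟨t, ht, rfl⟩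
      refine le_trans ?_ (le_iSup _ t)
      have : ¬ (⊤ : L) = ⊥ := by
        intro hh
        exact ht (le_trans le_top (hh ▸ bot_le))
      rw [if_neg ht, if_neg this]
    · apply iSup_le
      intro t
      by_cases h : x ≤ t
      · simp [h]
      · by_cases h2 : (⊤ : L) = ⊥
        · simp [h, h2]
        · simp only [h, h2, if_false]
          exact le_sSup ⟨t, h, rfl⟩
  exact ⟨main, fun f hf => ⟨raneI f, by rw [← main, hf]⟩⟩
end

section
/- If u is a left unit or a right unit of the semigroup of tight endomaps of a complete lattice L under composition, then u is the identity map of L. Consequently, the quantale of tight endomaps of L is unital if and only if the identity of L is tight (equivalently, by Raney's theorem, if and only if L is completely distributive). -/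
open Classical in
/-- Step maps: `⊥` below `a`, constant `b` elsewhere. -/
noncomputable def rstep {L : Type*} [CompleteLattice L] (a b : L) : L → L :=
  fun x => if x ≤ a then ⊥ else b

open Classical in
lemma rstep_tight {L : Type*} [CompleteLattice L] (a b : L) : Tight (rstep a b) := by
  funext x
  show sSup (raneI (rstep a b) '' {t | ¬ x ≤ t}) = rstep a b x
  by_cases hxa : x ≤ a
  · rw [rstep, if_pos hxa]
    refine le_antisymm (sSup_le ?_) bot_le
    rintro y ⟨t, ht, rfl⟩
    have hat : ¬ a ≤ t := fun h => ht (hxa.trans h)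
    have h1 : raneI (rstep a b) t ≤ rstep a b a := sInf_le ⟨a, hat, rfl⟩
    simpa [rstep] using h1
  · rw [rstep, if_neg hxa]
    refine le_antisymm (sSup_le ?_) ?_
    · rintro y ⟨t, ht, rfl⟩
      by_cases hat : a ≤ t
      · have h1 : raneI (rstep a b) t ≤ rstep a b x := sInf_le ⟨x, ht, rfl⟩
        simpa [rstep, if_neg hxa] using h1
      · have h1 : raneI (rstep a b) t ≤ rstep a b a := sInf_le ⟨a, hat, rfl⟩
        simp only [rstep, if_pos (le_refl a)] at h1
        exact h1.trans bot_le
    · have hb : b ≤ raneI (rstep a b) a := by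
        apply le_sInf
        rintro y ⟨s, hs, rfl⟩
        simp [rstep, if_neg hs]
      exact hb.trans (le_sSup ⟨a, hxa, rfl⟩)

theorem stmt18 {L : Type*} [CompleteLattice L] :
    -- a left or right unit of the semigroup of tight maps is the identity:
    (∀ u : L → L, Tight u →
        ((∀ f : L → L, Tight f → u ∘ f = f) ∨
          (∀ f : L → L, Tight f → f ∘ u = f)) →
        u = id) ∧
    -- the quantale of tight maps is unital iff the identity is tight:
    ((∃ u : L → L, Tight u ∧
        ∀ f : L → L, Tight f → u ∘ f = f ∧ f ∘ u = f) ↔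
      Tight (id : L → L)) := by
  have main : ∀ u : L → L,
      ((∀ f : L → L, Tight f → u ∘ f = f) ∨
        (∀ f : L → L, Tight f → f ∘ u = f)) → u = id := by
    intro u h
    rcases h with h | h
    · -- left unit
      funext b
      by_cases hb : b = (⊥ : L)
      · subst hb
        have := congrFun (h (rstep ⊥ ⊥) (rstep_tight ⊥ ⊥)) ⊥
        simpa [rstep] using this
      · have := congrFun (h (rstep ⊥ b) (rstep_tight ⊥ b)) b
        have hble : ¬ b ≤ (⊥ : L) := by simpa [le_bot_iff] using hb
        simp only [Function.comp_apply, rstep, if_neg hble] at this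
        exact this
    · -- right unit
      have key : ∀ a x : L, u x ≤ a ↔ x ≤ a := by
        intro a x
        have heq := congrFun (h (rstep a ⊤) (rstep_tight a ⊤)) x
        simp only [Function.comp_apply, rstep] at heq
        constructor
        · intro hux
          by_contra hx
          rw [if_pos hux, if_neg hx] at heq
          exact hx (le_top.trans (heq.ge.trans (bot_le : (⊥:L) ≤ a)))
        · intro hx
          by_contra hux
          rw [if_neg hux, if_pos hx] at heq
          exact hux (le_top.trans (heq.le.trans (bot_le : (⊥:L) ≤ a)))
      funext x
      exact le_antisymm ((key x x).mpr le_rfl) ((key (u x) x).mp le_rfl)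
  refine ⟨fun u _ h => main u h, ?_, ?_⟩
  · rintro ⟨u, hu, hunit⟩
    have : u = id := main u (Or.inl fun f hf => (hunit f hf).1)
    rwa [this] at hu
  · intro hid
    exact ⟨id, hid, fun f _ => ⟨rfl, rfl⟩⟩
end

section
/- If a Frobenius quantale Q admits a strongly continuous quantale embedding (a quantale embedding preserving arbitrary infima and both residuals) into a unital quantale, then Q itself is unital; specifically, the element u := ⋀{x \ x : x ∈ Q} is a two-sided unit of Q. -/
theorem stmt19 {Q Q' : Type*} [CompleteLattice Q] [CompleteLattice Q']
    -- Q is a Frobenius quantale: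
    (mul : Q → Q → Q)
    (hassoc : ∀ x y z, mul (mul x y) z = mul x (mul y z))
    (ldiv rdiv : Q → Q → Q)
    (hldiv : ∀ x y z : Q, mul x y ≤ z ↔ y ≤ ldiv x z)
    (hrdiv : ∀ x y z : Q, mul x y ≤ z ↔ x ≤ rdiv z y)
    (lneg rneg : Q → Q)
    (hlanti : Antitone lneg) (hranti : Antitone rneg)
    (hinv1 : ∀ x, lneg (rneg x) = x) (hinv2 : ∀ x, rneg (lneg x) = x)
    (hserre : ∀ x y, ldiv x (lneg y) = rdiv (rneg x) y)
    -- Q' is a unital quantale: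
    (mul' : Q' → Q' → Q')
    (hassoc' : ∀ x y z, mul' (mul' x y) z = mul' x (mul' y z))
    (ldiv' rdiv' : Q' → Q' → Q')
    (hldiv' : ∀ x y z : Q', mul' x y ≤ z ↔ y ≤ ldiv' x z)
    (hrdiv' : ∀ x y z : Q', mul' x y ≤ z ↔ x ≤ rdiv' z y)
    (e : Q') (hel : ∀ x, mul' e x = x) (her : ∀ x, mul' x e = x)
    -- ι is a strongly continuous quantale embedding:
    (ι : Q → Q')
    (hinj : Function.Injective ι)
    (hsup : ∀ s : Set Q, ι (sSup s) = sSup (ι '' s))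
    (hmul : ∀ x y, ι (mul x y) = mul' (ι x) (ι y))
    (hinf : ∀ s : Set Q, ι (sInf s) = sInf (ι '' s))
    (hld : ∀ x y, ι (ldiv x y) = ldiv' (ι x) (ι y))
    (hrd : ∀ x y, ι (rdiv x y) = rdiv' (ι x) (ι y)) :
    -- then u := ⋀ {x \ x} is a two-sided unit of Q:
    ∀ x : Q, mul (sInf {z | ∃ y, z = ldiv y y}) x = x ∧
      mul x (sInf {z | ∃ y, z = ldiv y y}) = x := by
  set S : Set Q := {z | ∃ y, z = ldiv y y} with hS
  set u : Q := sInf S with hu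
  -- ι reflects order
  have hsup2 : ∀ a b : Q, ι (a ⊔ b) = ι a ⊔ ι b := by
    intro a b
    rw [show a ⊔ b = sSup {a, b} by simp, hsup, Set.image_pair, sSup_pair]
  have hrefl : ∀ a b : Q, ι a ≤ ι b → a ≤ b := by
    intro a b h
    have : ι (a ⊔ b) = ι b := by rw [hsup2]; exact sup_eq_right.mpr h
    have := hinj this
    exact le_of_sup_eq this
  -- monotonicity of mul' in each argument
  have hmonor : ∀ (a : Q') {c d : Q'}, c ≤ d → mul' a c ≤ mul' a d := by
    intro a c d h
    exact (hldiv' a c (mul' a d)).mpr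
      (le_trans h ((hldiv' a d (mul' a d)).mp le_rfl))
  have hmonol : ∀ (a : Q') {c d : Q'}, c ≤ d → mul' c a ≤ mul' d a := by
    intro a c d h
    exact (hrdiv' c a (mul' d a)).mpr
      (le_trans h ((hrdiv' d a (mul' d a)).mp le_rfl))
  -- e ≤ ι u
  have heu : e ≤ ι u := by
    rw [hu, hinf]
    apply le_sInf
    rintro b ⟨z, ⟨y, rfl⟩, rfl⟩
    rw [hld]
    exact (hldiv' (ι y) e (ι y)).mp (le_of_eq (her (ι y)))
  -- rdiv y y ∈ S
  have hrdS : ∀ y : Q, rdiv y y ∈ S := by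
    intro y
    refine ⟨lneg y, ?_⟩
    have := hserre (lneg y) y
    rw [hinv2] at this
    exact this.symm
  intro x
  constructor
  · -- left unit
    have h1 : mul u x ≤ x := (hrdiv u x x).mpr (sInf_le (hrdS x))
    have h2 : x ≤ mul u x := by
      apply hrefl
      calc ι x = mul' e (ι x) := (hel (ι x)).symm
        _ ≤ mul' (ι u) (ι x) := hmonol _ heu
        _ = ι (mul u x) := (hmul u x).symm
    exact le_antisymm h1 h2
  · -- right unit
    have h1 : mul x u ≤ x := (hldiv x u x).mpr (sInf_le ⟨x, rfl⟩)
    have h2 : x ≤ mul x u := by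
      apply hrefl
      calc ι x = mul' (ι x) e := (her (ι x)).symm
        _ ≤ mul' (ι x) (ι u) := hmonor _ heu
        _ = ι (mul x u) := (hmul x u).symm
    exact le_antisymm h1 h2
end
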